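/- The formal power series T(x) = ∑_{n≥0} t(n) xⁿ satisfies the cubic equation (6x⁵ − 3x⁴ + 2x³ + 3x² − 1)T³ + (x⁵ − x⁴ + x³ + 2x² − 1)T² + (x³ − x² + 1)T + 1 = 0. -/

import Mathlib

/-- Relations of the modular group presentation ⟨U, S | U³, S²⟩:
`true` plays the role of `U`, `false` the role of `S`. -/
def modularRels : Set (FreeGroup Bool) :=
  {FreeGroup.of true ^ 3, FreeGroup.of false ^ 2}

/-- Γ = PSL₂(ℤ) presented as ⟨U, S | U³, S²⟩. -/
abbrev ModularGroup' := PresentedGroup modularRels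

/-- The letter map: `true ↦ U`, `false ↦ S`. -/
def letterΓ : Bool → ModularGroup' := fun b => PresentedGroup.of b

/-- The product in Γ of a word in the alphabet {U, S}. -/
def wordProd (l : List Bool) : ModularGroup' := (l.map letterΓ).prod

/-- `t n` is the number of words of length `n` in {U,S} equal to the identity in Γ. -/
noncomputable def t (n : ℕ) : ℕ :=
  Nat.card {w : Fin n → Bool // wordProd (List.ofFn w) = 1}

/-- The generating function T(x) = ∑ t(n) xⁿ. -/
noncomputable def Tser : PowerSeries ℚ := PowerSeries.mk fun n => (t n : ℚ)

inductive Ltr | u1 | u2 | s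
  deriving DecidableEq

open Ltr in
def step : Bool → List Ltr → List Ltr
  | true, [] => [u1]
  | true, u1 :: t => u2 :: t
  | true, u2 :: t => t
  | true, s :: t => u1 :: s :: t
  | false, [] => [s]
  | false, s :: t => t
  | false, x :: t => s :: x :: t

def go : List Bool → List Ltr → List Ltr
  | [], l => l
  | b :: w, l => go w (step b l)

@[simp] lemma go_nil (l : List Ltr) : go [] l = l := rfl
@[simp] lemma go_cons (b : Bool) (w : List Bool) (l : List Ltr) :
    go (b :: w) l = go w (step b l) := rfl

lemma go_append (u v : List Bool) (l : List Ltr) :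
    go (u ++ v) l = go v (go u l) := by
  induction u generalizing l with
  | nil => rfl
  | cons b u ih => simp [ih]

lemma step_append (b : Bool) (x : Ltr) (t m : List Ltr) :
    step b ((x :: t) ++ m) = step b (x :: t) ++ m := by
  cases b <;> cases x <;> rfl

lemma go_local (w : List Bool) (l m : List Ltr)
    (h : ∀ p, p <+: w → p ≠ w → go p l ≠ []) :
    go w (l ++ m) = go w l ++ m := by
  induction w generalizing l with
  | nil => rfl
  | cons b w ih =>
    have hl : l ≠ [] := h [] (List.nil_prefix) (by simp)
    obtain ⟨x, t, rfl⟩ := List.exists_cons_of_ne_nil hl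
    rw [go_cons, go_cons, step_append]
    exact ih (step b (x :: t)) fun p hp hne =>
      h (b :: p) (List.cons_prefix_cons.2 ⟨rfl, hp⟩) (by simpa using hne)

lemma prefix_singleton {p : List Bool} {b : Bool} (hp : p <+: [b]) (hne : p ≠ [b]) :
    p = [] := by
  cases p with
  | nil => rfl
  | cons c p' =>
    obtain ⟨rfl, hp'⟩ := List.cons_prefix_cons.1 hp
    simp_all

lemma split (w : List Bool) (zs l : List Ltr) (hzs : zs ≠ [])
    (h : go w (zs ++ l) = []) :
    ∃ v₁ v₂, w = v₁ ++ v₂ ∧ go v₁ zs = [] ∧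
      (∀ p, p <+: v₁ → p ≠ v₁ → go p zs ≠ []) ∧ go v₂ l = [] := by
  induction w generalizing zs with
  | nil =>
    exact absurd (by cases zs <;> simp_all) hzs
  | cons b w ih =>
    obtain ⟨x, t, rfl⟩ := List.exists_cons_of_ne_nil hzs
    rw [go_cons, step_append] at h
    by_cases h0 : step b (x :: t) = []
    · refine ⟨[b], w, rfl, by simp [h0], ?_, ?_⟩
      · intro p hp hne
        rw [prefix_singleton hp hne]; simp
      · rw [h0] at h; simpa using h
    · obtain ⟨v₁, v₂, rfl, h1, h2, h3⟩ := ih (step b (x :: t)) h0 h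
      refine ⟨b :: v₁, v₂, rfl, by simpa using h1, ?_, h3⟩
      intro p hp hne
      cases p with
      | nil => simp
      | cons c p' =>
        obtain ⟨rfl, hp'⟩ := List.cons_prefix_cons.1 hp
        exact h2 p' hp' (by simpa using hne)

def Ltr.isS : Ltr → Bool
  | .s => true
  | _ => false

def Red (l : List Ltr) : Prop := l.Chain' (fun x y => x.isS ≠ y.isS)

lemma red_step {l : List Ltr} (b : Bool) (h : Red l) : Red (step b l) := by
  unfold Red at *
  match b, l with
  | true, [] => simp [step, List.Chain']
  | true, .u1 :: t => simpa [step, List.Chain', List.isChain_cons, Ltr.isS] using (by simpa [List.Chain', List.isChain_cons, Ltr.isS] using h : _)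
  | true, .u2 :: t => exact h.tail
  | true, .s :: t => simpa [step, List.Chain', List.isChain_cons_cons, Ltr.isS] using h
  | false, [] => simp [step, List.Chain']
  | false, .s :: t => exact h.tail
  | false, .u1 :: t => simpa [step, List.Chain', List.isChain_cons_cons, Ltr.isS] using h
  | false, .u2 :: t => simpa [step, List.Chain', List.isChain_cons_cons, Ltr.isS] using h

lemma stepU3 {l : List Ltr} (h : Red l) :
    step true (step true (step true l)) = l := by
  match l with
  | [] => rfl
  | [.u1] => rfl
  | .u1 :: .s :: t => rfl
  | .u1 :: .u1 :: t => exfalso; simp [Red, List.Chain', List.isChain_cons_cons, Ltr.isS] at h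
  | .u1 :: .u2 :: t => exfalso; simp [Red, List.Chain', List.isChain_cons_cons, Ltr.isS] at h
  | [.u2] => rfl
  | .u2 :: .s :: t => rfl
  | .u2 :: .u1 :: t => exfalso; simp [Red, List.Chain', List.isChain_cons_cons, Ltr.isS] at h
  | .u2 :: .u2 :: t => exfalso; simp [Red, List.Chain', List.isChain_cons_cons, Ltr.isS] at h
  | .s :: t => rfl

lemma stepS2 {l : List Ltr} (h : Red l) :
    step false (step false l) = l := by
  match l with
  | [] => rfl
  | [.s] => rfl
  | .s :: .u1 :: t => rfl
  | .s :: .u2 :: t => rfl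
  | .s :: .s :: t => exfalso; simp [Red, List.Chain', List.isChain_cons_cons, Ltr.isS] at h
  | .u1 :: t => rfl
  | .u2 :: t => rfl

def NF := {l : List Ltr // Red l}

def eU : Equiv.Perm NF where
  toFun x := ⟨step true x.1, red_step _ x.2⟩
  invFun x := ⟨step true (step true x.1), red_step _ (red_step _ x.2)⟩
  left_inv x := Subtype.ext (stepU3 x.2)
  right_inv x := Subtype.ext (by
    have := stepU3 (red_step true x.2)
    -- step true (step true (step true (step true l))) = step true l
    -- want: step true (step true (step true l)) applied... goal: step true (step true (step true x)) = x
    exact stepU3 x.2)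

def eS : Equiv.Perm NF where
  toFun x := ⟨step false x.1, red_step _ x.2⟩
  invFun x := ⟨step false x.1, red_step _ x.2⟩
  left_inv x := Subtype.ext (stepS2 x.2)
  right_inv x := Subtype.ext (stepS2 x.2)

lemma eU3 : eU ^ 3 = 1 := by
  ext x
  simp only [pow_succ, pow_zero, one_mul, Equiv.Perm.mul_apply, Equiv.Perm.one_apply]
  exact Subtype.ext (stepU3 x.2)

lemma eS2 : eS ^ 2 = 1 := by
  ext x
  simp only [pow_succ, pow_zero, one_mul, Equiv.Perm.mul_apply, Equiv.Perm.one_apply]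
  exact Subtype.ext (stepS2 x.2)


lemma relU : (letterΓ true) ^ 3 = 1 := by
  have : PresentedGroup.mk modularRels (FreeGroup.of true ^ 3) = 1 := by
    apply (QuotientGroup.eq_one_iff _).2
    exact Subgroup.subset_normalClosure (by left; rfl)
  simpa [letterΓ, PresentedGroup.of] using this

lemma relS : (letterΓ false) ^ 2 = 1 := by
  have : PresentedGroup.mk modularRels (FreeGroup.of false ^ 2) = 1 := by
    apply (QuotientGroup.eq_one_iff _).2
    exact Subgroup.subset_normalClosure (by right; rfl)
  simpa [letterΓ, PresentedGroup.of] using this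

lemma rels_perm : ∀ r ∈ modularRels, (FreeGroup.lift fun b => if b then eU else eS) r = 1 := by
  intro r hr
  rcases hr with h | h <;> subst h <;>
    simp [map_pow, FreeGroup.lift_apply_of, eU3, eS2]

noncomputable def φ : ModularGroup' →* Equiv.Perm NF := PresentedGroup.toGroup rels_perm

lemma phi_letter (b : Bool) : φ (letterΓ b) = if b then eU else eS :=
  PresentedGroup.toGroup.of rels_perm

def nilNF : NF := ⟨[], by simp [Red, List.Chain']⟩

lemma wordProd_nil : wordProd [] = 1 := rfl
lemma wordProd_cons (b : Bool) (w : List Bool) :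
    wordProd (b :: w) = letterΓ b * wordProd w := by
  simp [wordProd]
lemma wordProd_append (u v : List Bool) :
    wordProd (u ++ v) = wordProd u * wordProd v := by
  simp [wordProd]

lemma phi_word (w : List Bool) : (φ (wordProd w) nilNF).1 = go w.reverse [] := by
  induction w with
  | nil => simp [wordProd_nil, nilNF]; rfl
  | cons b w ih =>
    rw [wordProd_cons, map_mul, Equiv.Perm.mul_apply]
    have hval : ((φ (letterΓ b)) (φ (wordProd w) nilNF)).1
        = step b ((φ (wordProd w) nilNF)).1 := by
      rw [phi_letter]; cases b <;> rfl
    rw [hval, ih, List.reverse_cons, go_append]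
    rfl

def evalL : Ltr → ModularGroup'
  | .u1 => letterΓ true
  | .u2 => letterΓ true * letterΓ true
  | .s => letterΓ false

def evalNF (l : List Ltr) : ModularGroup' := (l.map evalL).prod

lemma eval_step (b : Bool) (l : List Ltr) :
    evalNF (step b l) = letterΓ b * evalNF l := by
  have hU : ∀ z : ModularGroup', letterΓ true * (letterΓ true * (letterΓ true * z)) = z := by
    intro z
    have : letterΓ true * (letterΓ true * (letterΓ true * z)) = (letterΓ true) ^ 3 * z := by
      rw [pow_succ, pow_two, mul_assoc, mul_assoc]
    rw [this, relU, one_mul]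
  have hS : ∀ z : ModularGroup', letterΓ false * (letterΓ false * z) = z := by
    intro z
    have : letterΓ false * (letterΓ false * z) = (letterΓ false) ^ 2 * z := by
      rw [pow_two, mul_assoc]
    rw [this, relS, one_mul]
  match b, l with
  | true, [] => simp [step, evalNF, evalL]
  | true, .u1 :: t => simp [step, evalNF, evalL, mul_assoc]
  | true, .u2 :: t =>
    simp only [step, evalNF, List.map_cons, List.prod_cons, evalL, mul_assoc]
    exact (hU _).symm
  | true, .s :: t => simp [step, evalNF, evalL, mul_assoc]
  | false, [] => simp [step, evalNF, evalL]
  | false, .s :: t =>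
    simp only [step, evalNF, List.map_cons, List.prod_cons, evalL]
    exact (hS _).symm
  | false, .u1 :: t => simp [step, evalNF, evalL, mul_assoc]
  | false, .u2 :: t => simp [step, evalNF, evalL, mul_assoc]

lemma eval_go (w : List Bool) (l : List Ltr) :
    evalNF (go w l) = wordProd w.reverse * evalNF l := by
  induction w generalizing l with
  | nil => simp [wordProd_nil]
  | cons b w ih =>
    rw [go_cons, ih, eval_step, List.reverse_cons, wordProd_append, mul_assoc]
    simp [wordProd_cons, wordProd_nil, mul_assoc]

lemma word_iff (w : List Bool) : wordProd w = 1 ↔ go w.reverse [] = [] := by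
  constructor
  · intro h
    rw [← phi_word, h]
    simp [nilNF]; rfl
  · intro h
    have := eval_go w.reverse []
    rw [h, List.reverse_reverse] at this
    simpa [evalNF, wordProd_nil] using this.symm

open PowerSeries

def Cat (b : Bool) (Q R : List Bool → Prop) : List Bool → Prop :=
  fun l => ∃ v₁ v₂, Q v₁ ∧ R v₂ ∧ l = b :: (v₁ ++ v₂)

noncomputable def N (P : List Bool → Prop) (n : ℕ) : ℕ :=
  Nat.card {l : List Bool // P l ∧ l.length = n}

instance finite_length (n : ℕ) : Finite {l : List Bool // l.length = n} := by
  have e : {l : List Bool // l.length = n} ≃ List.Vector Bool n := Equiv.refl _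
  exact Finite.of_equiv _ ((e.trans (Equiv.vectorEquivFin Bool n)).symm)

instance finite_pred (P : List Bool → Prop) (n : ℕ) :
    Finite {l : List Bool // P l ∧ l.length = n} := by
  have e : {l : List Bool // P l ∧ l.length = n} ≃ {x : {l : List Bool // l.length = n} // P x.1} :=
    { toFun := fun x => ⟨⟨x.1, x.2.2⟩, x.2.1⟩
      invFun := fun x => ⟨x.1.1, x.2, x.1.2⟩
      left_inv := fun x => rfl
      right_inv := fun x => rfl }
  exact Finite.of_equiv _ e.symm

noncomputable def ser (P : List Bool → Prop) : PowerSeries ℚ :=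
  PowerSeries.mk fun n => (N P n : ℚ)

@[simp] lemma coeff_ser (P : List Bool → Prop) (n : ℕ) :
    (PowerSeries.coeff n) (ser P) = (N P n : ℚ) := by
  simp [ser]

lemma N_congr {P Q : List Bool → Prop} (h : ∀ l, P l ↔ Q l) (n : ℕ) : N P n = N Q n :=
  Nat.card_congr (Equiv.subtypeEquivRight (by intro l; rw [h l]))

lemma ser_congr {P Q : List Bool → Prop} (h : ∀ l, P l ↔ Q l) : ser P = ser Q := by
  apply PowerSeries.ext; intro n
  simp [ser, N_congr h]

lemma nat_card_sum (α β : Type*) [Finite α] [Finite β] :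
    Nat.card (α ⊕ β) = Nat.card α + Nat.card β := by
  letI := Fintype.ofFinite α
  letI := Fintype.ofFinite β
  simp [Nat.card_eq_fintype_card]

lemma ser_or (P Q R : List Bool → Prop) (h : ∀ l, P l ↔ Q l ∨ R l)
    (hd : ∀ l, ¬(Q l ∧ R l)) : ser P = ser Q + ser R := by
  apply PowerSeries.ext; intro n
  have key : N P n = N Q n + N R n := by
    unfold N
    rw [← nat_card_sum]
    apply Nat.card_congr
    apply Equiv.symm
    apply Equiv.ofBijective
      (fun x : {l : List Bool // Q l ∧ l.length = n} ⊕ {l : List Bool // R l ∧ l.length = n} =>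
        (show {l : List Bool // P l ∧ l.length = n} from
          match x with
          | Sum.inl y => ⟨y.1, (h y.1).2 (Or.inl y.2.1), y.2.2⟩
          | Sum.inr y => ⟨y.1, (h y.1).2 (Or.inr y.2.1), y.2.2⟩))
    constructor
    · rintro (a | a) (b | b) hab <;>
        simp only [Subtype.mk.injEq] at hab
      · exact congrArg Sum.inl (Subtype.ext hab)
      · exact absurd ⟨a.2.1, hab ▸ b.2.1⟩ (hd a.1)
      · exact absurd ⟨b.2.1, hab ▸ a.2.1⟩ (hd b.1)
      · exact congrArg Sum.inr (Subtype.ext hab)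
    · rintro ⟨l, hp, hl⟩
      rcases (h l).1 hp with h' | h'
      · exact ⟨Sum.inl ⟨l, h', hl⟩, rfl⟩
      · exact ⟨Sum.inr ⟨l, h', hl⟩, rfl⟩
  simp [ser, key]

lemma ser_single (w₀ : List Bool) : ser (fun l => l = w₀) = X ^ w₀.length := by
  apply PowerSeries.ext; intro n
  rw [coeff_ser, PowerSeries.coeff_X_pow]
  by_cases h : n = w₀.length
  · subst h
    have : N (fun l => l = w₀) w₀.length = 1 := by
      unfold N
      rw [Nat.card_eq_one_iff_unique]
      exact ⟨⟨fun a b => Subtype.ext (a.2.1.trans b.2.1.symm)⟩, ⟨⟨w₀, rfl, rfl⟩⟩⟩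
    simp [this]
  · have : N (fun l => l = w₀) n = 0 := by
      unfold N
      rw [Nat.card_eq_zero]
      left
      exact ⟨fun x => h (by rw [← x.2.2, x.2.1])⟩
    simp [this, h]

lemma ser_cons (b : Bool) (Q : List Bool → Prop) :
    ser (fun l => ∃ v, Q v ∧ l = b :: v) = X * ser Q := by
  apply PowerSeries.ext; intro n
  cases n with
  | zero =>
    have : N (fun l => ∃ v, Q v ∧ l = b :: v) 0 = 0 := by
      unfold N; rw [Nat.card_eq_zero]; left
      constructor; rintro ⟨l, ⟨v, _, rfl⟩, hl⟩; simp at hl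
    simp [this]
  | succ m =>
    rw [coeff_ser, PowerSeries.coeff_succ_X_mul, coeff_ser]
    congr 1
    apply Nat.card_congr
    apply Equiv.symm
    apply Equiv.ofBijective
      (fun x : {l : List Bool // Q l ∧ l.length = m} =>
        (show {l : List Bool // (∃ v, Q v ∧ l = b :: v) ∧ l.length = m + 1} from
          ⟨b :: x.1, ⟨x.1, x.2.1, rfl⟩, by simp [x.2.2]⟩))
    constructor
    · intro a c hac
      simp only [Subtype.mk.injEq, List.cons.injEq] at hac
      exact Subtype.ext hac.2
    · rintro ⟨l, ⟨v, hv, rfl⟩, hl⟩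
      exact ⟨⟨v, hv, by simpa using hl⟩, rfl⟩


lemma nat_card_sigma_prod (m : ℕ) (Q R : List Bool → Prop) :
    Nat.card ((p : Finset.HasAntidiagonal.antidiagonal m) ×
      ({l : List Bool // Q l ∧ l.length = p.1.1} × {l : List Bool // R l ∧ l.length = p.1.2}))
      = ∑ p ∈ Finset.HasAntidiagonal.antidiagonal m, N Q p.1 * N R p.2 := by
  letI : ∀ p : Finset.HasAntidiagonal.antidiagonal m,
      Fintype ({l : List Bool // Q l ∧ l.length = p.1.1} ×
        {l : List Bool // R l ∧ l.length = p.1.2}) := fun p => Fintype.ofFinite _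
  rw [Nat.card_eq_fintype_card, Fintype.card_sigma]
  rw [← Finset.sum_attach (Finset.HasAntidiagonal.antidiagonal m) (fun p => N Q p.1 * N R p.2)]
  apply Finset.sum_congr rfl
  intro p _
  rw [← Nat.card_eq_fintype_card, Nat.card_prod]
  rfl

lemma ser_cat (b : Bool) (Q R : List Bool → Prop)
    (hu : ∀ v₁ v₂ w₁ w₂, Q v₁ → R v₂ → Q w₁ → R w₂ → v₁ ++ v₂ = w₁ ++ w₂ → v₁ = w₁) :
    ser (Cat b Q R) = X * (ser Q * ser R) := by
  apply PowerSeries.ext; intro n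
  cases n with
  | zero =>
    have h0 : N (Cat b Q R) 0 = 0 := by
      unfold N; rw [Nat.card_eq_zero]; left
      constructor; rintro ⟨l, ⟨v₁, v₂, _, _, rfl⟩, hl⟩; simp at hl
    simp [h0]
  | succ m =>
    rw [coeff_ser, PowerSeries.coeff_succ_X_mul, PowerSeries.coeff_mul]
    have key : N (Cat b Q R) (m + 1) = ∑ p ∈ Finset.HasAntidiagonal.antidiagonal m, N Q p.1 * N R p.2 := by
      rw [← nat_card_sigma_prod m Q R]
      apply Nat.card_congr
      apply Equiv.symm
      apply Equiv.ofBijective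
        (fun x : (p : Finset.HasAntidiagonal.antidiagonal m) ×
            ({l : List Bool // Q l ∧ l.length = p.1.1} × {l : List Bool // R l ∧ l.length = p.1.2}) =>
          (show {l : List Bool // Cat b Q R l ∧ l.length = m + 1} from
            ⟨b :: x.2.1.1 ++ x.2.2.1, ⟨x.2.1.1, x.2.2.1, x.2.1.2.1, x.2.2.2.1, rfl⟩, by
              have h1 := x.2.1.2.2
              have h2 := x.2.2.2.2
              have h3 := Finset.HasAntidiagonal.mem_antidiagonal.mp x.1.2
              simp [h1, h2, ← h3]⟩))
      constructor
      · rintro ⟨p, v₁, v₂⟩ ⟨q, w₁, w₂⟩ hx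
        have hx2 : (b :: v₁.1 ++ v₂.1 : List Bool) = b :: w₁.1 ++ w₂.1 := Subtype.ext_iff.mp hx
        have hx3 : v₁.1 ++ v₂.1 = w₁.1 ++ w₂.1 := by injection hx2
        have h1 : v₁.1 = w₁.1 := hu v₁.1 v₂.1 w₁.1 w₂.1 v₁.2.1 v₂.2.1 w₁.2.1 w₂.2.1 hx3
        have h2 : v₂.1 = w₂.1 := by
          rw [h1] at hx3
          exact List.append_cancel_left hx3
        have hpq : p = q := by
          apply Subtype.ext
          have e1 : p.1.1 = q.1.1 := by rw [← v₁.2.2, ← w₁.2.2, h1]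
          have e2 : p.1.2 = q.1.2 := by rw [← v₂.2.2, ← w₂.2.2, h2]
          exact Prod.ext e1 e2
        subst hpq
        simp only [Sigma.mk.inj_iff, heq_eq_eq, true_and]
        exact Prod.ext (Subtype.ext h1) (Subtype.ext h2)
      · rintro ⟨l, ⟨v₁, v₂, hq, hr, rfl⟩, hlen⟩
        have hm : v₁.length + v₂.length = m := by simpa using hlen
        refine ⟨⟨⟨(v₁.length, v₂.length), Finset.HasAntidiagonal.mem_antidiagonal.mpr hm⟩,
          ⟨v₁, hq, rfl⟩, ⟨v₂, hr, rfl⟩⟩, rfl⟩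
    rw [key]
    push_cast
    apply Finset.sum_congr rfl
    intro p _
    simp


/-- First-passage words over a single symbol `x`. -/
def FP (x : Ltr) (w : List Bool) : Prop :=
  go w [x] = [] ∧ ∀ p, p <+: w → p ≠ w → go p [x] ≠ []

def Emp (w : List Bool) : Prop := go w [] = []

lemma FP_ne_nil {x : Ltr} {w : List Bool} (h : FP x w) : w ≠ [] := by
  rintro rfl
  simpa using h.1

lemma FP_uniq {x : Ltr} {v₁ w₁ : List Bool} (v₂ w₂ : List Bool)
    (h1 : FP x v₁) (h2 : FP x w₁) (he : v₁ ++ v₂ = w₁ ++ w₂) : v₁ = w₁ := by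
  rcases List.prefix_or_prefix_of_prefix (List.prefix_append v₁ v₂)
    (he ▸ List.prefix_append w₁ w₂) with h | h
  · by_contra hne
    exact h2.2 v₁ h hne h1.1
  · by_contra hne
    exact h1.2 w₁ h (fun e => hne e.symm) h2.1

lemma prefix_append_cases {p u v : List Bool} (h : p <+: u ++ v) :
    p <+: u ∨ ∃ q, q <+: v ∧ p = u ++ q := by
  rcases List.prefix_or_prefix_of_prefix h (List.prefix_append u v) with h' | h'
  · exact Or.inl h'
  · right
    obtain ⟨q, rfl⟩ := h'
    obtain ⟨r, hr⟩ := h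
    refine ⟨q, ⟨r, ?_⟩, rfl⟩
    rw [List.append_assoc] at hr
    exact List.append_cancel_left hr

/-- go over a first-passage word with extra stack below. -/
lemma go_FP_stack {x : Ltr} {v : List Bool} (h : FP x v) (m : List Ltr) :
    go v ([x] ++ m) = m := by
  rw [go_local v [x] m h.2, h.1]; rfl

lemma go_FP_prefix {x : Ltr} {v p : List Bool} (h : FP x v) (hp : p <+: v) (hne : p ≠ v)
    (m : List Ltr) : go p ([x] ++ m) = go p [x] ++ m := by
  apply go_local
  intro q hq hqne
  apply h.2 q (hq.trans hp)
  rintro rfl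
  exact hqne (hq.eq_of_length (le_antisymm hq.length_le hp.length_le))

lemma prefix_append_left {q v₂ : List Bool} (v₁ : List Bool) (hq : q <+: v₂) :
    v₁ ++ q <+: v₁ ++ v₂ := by
  obtain ⟨r, rfl⟩ := hq
  exact ⟨r, by simp⟩

lemma cat_to_FP {x y : Ltr} {b : Bool} (hstep : step b [x] = [y, x]) {v₁ v₂ : List Bool}
    (h1 : FP y v₁) (h2 : FP x v₂) : FP x (b :: (v₁ ++ v₂)) := by
  have hst : go v₁ (step b [x]) = [x] := by
    rw [hstep]
    exact go_FP_stack h1 [x]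
  constructor
  · rw [go_cons, go_append, hst]
    exact h2.1
  · intro p hp hne
    cases p with
    | nil => simp
    | cons c p' =>
      obtain ⟨rfl, hp'⟩ := List.cons_prefix_cons.1 hp
      rcases prefix_append_cases hp' with h' | ⟨q, hq, rfl⟩
      · by_cases hv : p' = v₁
        · subst hv
          rw [go_cons, hst]
          simp
        · rw [go_cons, hstep, show ([y, x] : List Ltr) = [y] ++ [x] from rfl,
            go_FP_prefix h1 h' hv]
          simp
      · rw [go_cons, go_append, hst]
        apply h2.2 q hq
        intro hqv
        exact hne (by rw [hqv])

lemma FP_to_cat {x y : Ltr} {b : Bool} (hstep : step b [x] = [y, x]) {w' : List Bool}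
    (hw : FP x (b :: w')) : ∃ v₁ v₂, FP y v₁ ∧ FP x v₂ ∧ w' = v₁ ++ v₂ := by
  have h := hw.1
  rw [go_cons, hstep] at h
  obtain ⟨v₁, v₂, rfl, hg1, hmin1, hg2⟩ :=
    split w' [y] [x] (by simp) (by simpa using h)
  have h1 : FP y v₁ := ⟨hg1, hmin1⟩
  refine ⟨v₁, v₂, h1, ⟨hg2, ?_⟩, rfl⟩
  intro q hq hqne
  have hpre : b :: (v₁ ++ q) <+: b :: (v₁ ++ v₂) :=
    List.cons_prefix_cons.2 ⟨rfl, prefix_append_left v₁ hq⟩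
  have hne : b :: (v₁ ++ q) ≠ b :: (v₁ ++ v₂) := by
    intro e
    apply hqne
    exact List.append_cancel_left (by injection e)
  have := hw.2 _ hpre hne
  rw [go_cons, hstep, go_append, show ([y, x] : List Ltr) = [y] ++ [x] from rfl,
    go_FP_stack h1 [x]] at this
  exact this

lemma FP_single {x : Ltr} {b : Bool} (hstep : step b [x] = []) {w' : List Bool}
    (hw : FP x (b :: w')) : w' = [] := by
  by_contra hne
  exact hw.2 [b] ⟨w', rfl⟩ (fun e => hne (by injection e with _ h; exact h.symm))
    (by simp [hstep])

lemma FP_of_single {x : Ltr} {b : Bool} (hstep : step b [x] = []) : FP x [b] :=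
  ⟨by simp [hstep], fun p hp hne => by rw [prefix_singleton hp hne]; simp⟩

lemma char_s (w : List Bool) :
    FP .s w ↔ (w = [false] ∨ Cat true (FP .u1) (FP .s) w) := by
  constructor
  · intro hw
    obtain ⟨b, w', rfl⟩ := List.exists_cons_of_ne_nil (FP_ne_nil hw)
    cases b
    · left
      rw [FP_single (x := .s) (b := false) rfl hw]
    · right
      obtain ⟨v₁, v₂, h1, h2, rfl⟩ := FP_to_cat (x := .s) (y := .u1) (b := true) rfl hw
      exact ⟨v₁, v₂, h1, h2, rfl⟩
  · rintro (rfl | ⟨v₁, v₂, h1, h2, rfl⟩)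
    · exact FP_of_single rfl
    · exact cat_to_FP (x := .s) (y := .u1) (b := true) rfl h1 h2

lemma char_u2 (w : List Bool) :
    FP .u2 w ↔ (w = [true] ∨ Cat false (FP .s) (FP .u2) w) := by
  constructor
  · intro hw
    obtain ⟨b, w', rfl⟩ := List.exists_cons_of_ne_nil (FP_ne_nil hw)
    cases b
    · right
      obtain ⟨v₁, v₂, h1, h2, rfl⟩ := FP_to_cat (x := .u2) (y := .s) (b := false) rfl hw
      exact ⟨v₁, v₂, h1, h2, rfl⟩
    · left
      rw [FP_single (x := .u2) (b := true) rfl hw]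
  · rintro (rfl | ⟨v₁, v₂, h1, h2, rfl⟩)
    · exact FP_of_single rfl
    · exact cat_to_FP (x := .u2) (y := .s) (b := false) rfl h1 h2

lemma char_u1 (w : List Bool) :
    FP .u1 w ↔ ((∃ v, FP .u2 v ∧ w = true :: v) ∨ Cat false (FP .s) (FP .u1) w) := by
  constructor
  · intro hw
    obtain ⟨b, w', rfl⟩ := List.exists_cons_of_ne_nil (FP_ne_nil hw)
    cases b
    · right
      obtain ⟨v₁, v₂, h1, h2, rfl⟩ := FP_to_cat (x := .u1) (y := .s) (b := false) rfl hw
      exact ⟨v₁, v₂, h1, h2, rfl⟩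
    · left
      refine ⟨w', ⟨by simpa [step] using hw.1, ?_⟩, rfl⟩
      intro p hp hne
      have := hw.2 (true :: p) (List.cons_prefix_cons.2 ⟨rfl, hp⟩) (by simpa using hne)
      simpa [step] using this
  · rintro (⟨v, hv, rfl⟩ | ⟨v₁, v₂, h1, h2, rfl⟩)
    · constructor
      · simpa [step] using hv.1
      · intro p hp hne
        cases p with
        | nil => simp
        | cons c p' =>
          obtain ⟨rfl, hp'⟩ := List.cons_prefix_cons.1 hp
          simpa [step] using hv.2 p' hp' (by simpa using hne)
    · exact cat_to_FP (x := .u1) (y := .s) (b := false) rfl h1 h2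

lemma char_emp (w : List Bool) :
    Emp w ↔ (w = [] ∨ (Cat true (FP .u1) Emp w ∨ Cat false (FP .s) Emp w)) := by
  constructor
  · intro hw
    cases w with
    | nil => exact Or.inl rfl
    | cons b w' =>
      right
      have h := hw
      unfold Emp at h
      rw [go_cons] at h
      cases b
      · right
        obtain ⟨v₁, v₂, rfl, hg1, hmin1, hg2⟩ :=
          split w' [.s] [] (by simp) (by simpa [step] using h)
        exact ⟨v₁, v₂, ⟨hg1, hmin1⟩, hg2, rfl⟩
      · left
        obtain ⟨v₁, v₂, rfl, hg1, hmin1, hg2⟩ :=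
          split w' [.u1] [] (by simp) (by simpa [step] using h)
        exact ⟨v₁, v₂, ⟨hg1, hmin1⟩, hg2, rfl⟩
  · rintro (rfl | (⟨v₁, v₂, h1, h2, rfl⟩ | ⟨v₁, v₂, h1, h2, rfl⟩))
    · rfl
    · show go (true :: (v₁ ++ v₂)) [] = []
      rw [go_cons, go_append, show step true ([] : List Ltr) = [Ltr.u1] from rfl, h1.1]
      exact h2
    · show go (false :: (v₁ ++ v₂)) [] = []
      rw [go_cons, go_append, show step false ([] : List Ltr) = [Ltr.s] from rfl, h1.1]
      exact h2


open PowerSeries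

lemma FP_hu (x : Ltr) (R : List Bool → Prop) :
    ∀ v₁ v₂ w₁ w₂, FP x v₁ → R v₂ → FP x w₁ → R w₂ → v₁ ++ v₂ = w₁ ++ w₂ → v₁ = w₁ :=
  fun v₁ v₂ w₁ w₂ h1 _ h3 _ he => FP_uniq v₂ w₂ h1 h3 he

lemma hB_eq : ser (FP .s) = X + X * (ser (FP .u1) * ser (FP .s)) := by
  conv_lhs => rw [ser_or (FP .s) (fun l => l = [false]) (Cat true (FP .u1) (FP .s)) char_s
    (by rintro l ⟨rfl, ⟨v₁, v₂, _, _, h⟩⟩; simp at h)]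
  rw [ser_single, ser_cat true _ _ (FP_hu _ _), show List.length [false] = 1 from rfl, pow_one]

lemma hC_eq : ser (FP .u2) = X + X * (ser (FP .s) * ser (FP .u2)) := by
  conv_lhs => rw [ser_or (FP .u2) (fun l => l = [true]) (Cat false (FP .s) (FP .u2)) char_u2
    (by rintro l ⟨rfl, ⟨v₁, v₂, _, _, h⟩⟩; simp at h)]
  rw [ser_single, ser_cat false _ _ (FP_hu _ _), show List.length [true] = 1 from rfl, pow_one]

lemma hA_eq : ser (FP .u1) = X * ser (FP .u2) + X * (ser (FP .s) * ser (FP .u1)) := by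
  conv_lhs => rw [ser_or (FP .u1) (fun l => ∃ v, FP .u2 v ∧ l = true :: v)
    (Cat false (FP .s) (FP .u1)) char_u1
    (by rintro l ⟨⟨v, _, rfl⟩, ⟨v₁, v₂, _, _, h⟩⟩; simp at h)]
  rw [ser_cons, ser_cat false _ _ (FP_hu _ _)]

lemma hE_eq : ser Emp = 1 + (X * (ser (FP .u1) * ser Emp) + X * (ser (FP .s) * ser Emp)) := by
  conv_lhs => rw [ser_or Emp (fun l => l = [])
    (fun l => Cat true (FP .u1) Emp l ∨ Cat false (FP .s) Emp l) char_emp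
    (by rintro l ⟨rfl, (⟨v₁, v₂, _, _, h⟩ | ⟨v₁, v₂, _, _, h⟩)⟩ <;> simp at h)]
  rw [ser_or _ (Cat true (FP .u1) Emp) (Cat false (FP .s) Emp) (fun l => Iff.rfl)
    (by rintro l ⟨⟨v₁, v₂, _, _, rfl⟩, ⟨w₁, w₂, _, _, h⟩⟩; simp at h),
    ser_cat true _ _ (FP_hu _ _), ser_cat false _ _ (FP_hu _ _)]
  have h0 : ser (fun l => l = ([] : List Bool)) = X ^ (0:ℕ) := ser_single []
  rw [h0, pow_zero]

lemma card_ofFn_eq (P : List Bool → Prop) (n : ℕ) :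
    Nat.card {w : Fin n → Bool // P (List.ofFn w)} = N P n := by
  apply Nat.card_congr
  apply Equiv.ofBijective
    (fun w : {w : Fin n → Bool // P (List.ofFn w)} =>
      (⟨List.ofFn w.1, w.2, List.length_ofFn⟩ : {l : List Bool // P l ∧ l.length = n}))
  constructor
  · intro v w h
    exact Subtype.ext (List.ofFn_injective (Subtype.ext_iff.mp h))
  · rintro ⟨l, hp, hl⟩
    subst hl
    exact ⟨⟨l.get, by simpa [List.ofFn_get] using hp⟩, Subtype.ext (List.ofFn_get l)⟩

lemma N_reverse (P : List Bool → Prop) (n : ℕ) :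
    N (fun l => P l.reverse) n = N P n := by
  apply Nat.card_congr
  exact
    { toFun := fun x => ⟨x.1.reverse, x.2.1, by simp [x.2.2]⟩
      invFun := fun x => ⟨x.1.reverse, by simpa using x.2.1, by simp [x.2.2]⟩
      left_inv := fun x => Subtype.ext (by simp)
      right_inv := fun x => Subtype.ext (by simp) }

lemma t_eq_N (n : ℕ) : t n = N Emp n := by
  unfold t
  calc Nat.card {w : Fin n → Bool // wordProd (List.ofFn w) = 1}
      = Nat.card {w : Fin n → Bool // go (List.ofFn w).reverse [] = []} :=
        Nat.card_congr (Equiv.subtypeEquivRight fun w => word_iff (List.ofFn w))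
    _ = N (fun l => go l.reverse [] = []) n := card_ofFn_eq (fun l => go l.reverse [] = []) n
    _ = N Emp n := N_reverse Emp n

lemma Tser_eq : Tser = ser Emp := by
  apply PowerSeries.ext
  intro n
  simp [Tser, ser, t_eq_N]

lemma t_card (n : ℕ) :
    t n = Fintype.card {w : Fin n → Bool // go (List.ofFn w).reverse [] = []} := by
  unfold t
  rw [Nat.card_congr (Equiv.subtypeEquivRight fun w => word_iff (List.ofFn w))]
  exact Nat.card_eq_fintype_card

lemma t_one : t 1 = 0 := by rw [t_card]; decide
lemma t_three : t 3 = 1 := by rw [t_card]; decide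

open PowerSeries in
theorem stmt8 :
    (6 * (X : PowerSeries ℚ) ^ 5 - 3 * X ^ 4 + 2 * X ^ 3 + 3 * X ^ 2 - 1) * Tser ^ 3 +
      (X ^ 5 - X ^ 4 + X ^ 3 + 2 * X ^ 2 - 1) * Tser ^ 2 +
      (X ^ 3 - X ^ 2 + 1) * Tser + 1 = 0 := by
  have h1 := hB_eq
  have h2 := hC_eq
  have h3 := hA_eq
  have h4 := hE_eq
  rw [← Tser_eq] at h4
  set A := ser (FP .u1) with hA
  set B := ser (FP .s) with hB
  set Cc := ser (FP .u2) with hCc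
  have h5 : A * (1 - X*B)^2 = X^2 := by
    linear_combination (1 - X*B) * h3 + X * h2
  have h6 : Tser * (1 - X*B)^3 - (1 - X*B)^2 - X^3*Tser = 0 := by
    linear_combination (X*Tser) * h5 + (1 - X*B)^2 * h4
  have h7 : (X*B)*((1 - X*B)^2 - X^3) - X^2*(1 - X*B)^2 = 0 := by
    linear_combination (X*(1 - X*B)^2) * h1 + (X*(X*B)) * h5
  have h8 : (Tser - Tser*X^2 - 1)*(1 - X*B)^2 + Tser*X^3*(1 - X*B) - 2*Tser*X^3 = 0 := by
    linear_combination h6 + Tser * h7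
  have hq2 : X^3 * (((Tser - Tser*X^2 - 1)^2 - 2*Tser*(Tser - Tser*X^2 - 1) - Tser*(Tser - Tser*X^2 - 1)*(1-X^2) - Tser^2*X^3)*(1 - X*B) + (-(Tser - Tser*X^2 - 1)^2 + 2*Tser*(Tser - Tser*X^2 - 1)*(1-X^2) + 2*Tser^2*X^3)) = 0 := by
    linear_combination ((Tser - Tser*X^2 - 1)^2) * h7 +
      ((Tser - Tser*X^2 - 1)*(1 - X*B) - (Tser - Tser*X^2 - 1)*(1-X^2) - Tser*X^3) * h8
  have hr : ((Tser - Tser*X^2 - 1)^2 - 2*Tser*(Tser - Tser*X^2 - 1) - Tser*(Tser - Tser*X^2 - 1)*(1-X^2) - Tser^2*X^3)*(1 - X*B) + (-(Tser - Tser*X^2 - 1)^2 + 2*Tser*(Tser - Tser*X^2 - 1)*(1-X^2) + 2*Tser^2*X^3) = 0 := by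
    have hX3 : (X : PowerSeries ℚ)^3 ≠ 0 := pow_ne_zero 3 PowerSeries.X_ne_zero
    exact mul_left_cancel₀ hX3 (hq2.trans (mul_zero _).symm)
  have hres :
      ((6 * (X : PowerSeries ℚ) ^ 5 - 3 * X ^ 4 + 2 * X ^ 3 + 3 * X ^ 2 - 1) * Tser ^ 3 +
        (X ^ 5 - X ^ 4 + X ^ 3 + 2 * X ^ 2 - 1) * Tser ^ 2 +
        (X ^ 3 - X ^ 2 + 1) * Tser + 1) * ((X^2 - 1)*Tser + 1)^2 = 0 := by
    linear_combination (-(((Tser - Tser*X^2 - 1)^2 - 2*Tser*(Tser - Tser*X^2 - 1) - Tser*(Tser - Tser*X^2 - 1)*(1-X^2) - Tser^2*X^3)^2)) * h8 +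
      ((Tser - Tser*X^2 - 1)*(((Tser - Tser*X^2 - 1)^2 - 2*Tser*(Tser - Tser*X^2 - 1) - Tser*(Tser - Tser*X^2 - 1)*(1-X^2) - Tser^2*X^3)*(1 - X*B) + (-(Tser - Tser*X^2 - 1)^2 + 2*Tser*(Tser - Tser*X^2 - 1)*(1-X^2) + 2*Tser^2*X^3)) - 2*(Tser - Tser*X^2 - 1)*(-(Tser - Tser*X^2 - 1)^2 + 2*Tser*(Tser - Tser*X^2 - 1)*(1-X^2) + 2*Tser^2*X^3) + Tser*X^3*((Tser - Tser*X^2 - 1)^2 - 2*Tser*(Tser - Tser*X^2 - 1) - Tser*(Tser - Tser*X^2 - 1)*(1-X^2) - Tser^2*X^3)) * hr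
  rcases mul_eq_zero.mp hres with h | h
  · exact h
  · exfalso
    have hW : (X^2 - 1)*Tser + 1 = 0 := by
      exact pow_eq_zero_iff (two_ne_zero) |>.mp h
    have hc := congrArg (PowerSeries.coeff 3) hW
    rw [map_add, sub_mul, one_mul, map_sub] at hc
    have e1 : (PowerSeries.coeff 3) ((X : PowerSeries ℚ)^2 * Tser)
        = (PowerSeries.coeff 1) Tser := PowerSeries.coeff_X_pow_mul Tser 2 1
    rw [e1] at hc
    simp only [Tser, PowerSeries.coeff_mk, PowerSeries.coeff_one, map_zero] at hc
    rw [t_one, t_three] at hc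
    norm_num at hc
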